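/- For every n ≥ 0 one has the bounds 1 − √Λ₂ < L₁ < λ₁,ₙ ≤ 1 and 1 − √Λ₁ < L₂ < λ₂,ₙ ≤ 1 (in particular all λ₁,ₙ and λ₂,ₙ are positive, so the recursions never divide by zero). -/

import Mathlib

set_option maxHeartbeats 1200000 in
theorem lambda_seq_bounds
    (ρ ρ₁ ρ₂ : ℝ) (hρ₁ : 0 < ρ₁) (hρ₂ : 0 < ρ₂) (hsum : ρ₁ + ρ₂ < ρ)
    (Λ₁ Λ₂ Λ : ℝ) (hΛ₁ : Λ₁ = (ρ₁ / ρ) ^ 2) (hΛ₂ : Λ₂ = (ρ₂ / ρ) ^ 2)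
    (hΛ : Λ = (Λ₁ - Λ₂) ^ 2 + 1 - 2 * (Λ₁ + Λ₂))
    (l₁ l₂ : ℕ → ℝ) (hl₁0 : l₁ 0 = 1) (hl₂0 : l₂ 0 = 1)
    (hl₁ : ∀ n : ℕ, l₁ (n + 1) = 1 - Λ₂ / l₂ n)
    (hl₂ : ∀ n : ℕ, l₂ (n + 1) = 1 - Λ₁ / l₁ n)
    (L₁ L₂ : ℝ)
    (hL₁ : L₁ = (1 + Λ₁ - Λ₂ + Real.sqrt Λ) / 2)
    (hL₂ : L₂ = (1 + Λ₂ - Λ₁ + Real.sqrt Λ) / 2) :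
    ∀ n : ℕ,
      (1 - Real.sqrt Λ₂ < L₁ ∧ L₁ < l₁ n ∧ l₁ n ≤ 1) ∧
      (1 - Real.sqrt Λ₁ < L₂ ∧ L₂ < l₂ n ∧ l₂ n ≤ 1) := by
  have hρ : 0 < ρ := by linarith
  set a := ρ₁ / ρ with ha_def
  set b := ρ₂ / ρ with hb_def
  have ha : 0 < a := div_pos hρ₁ hρ
  have hb : 0 < b := div_pos hρ₂ hρ
  have hab : a + b < 1 := by
    rw [ha_def, hb_def, ← add_div, div_lt_one hρ]; exact hsum
  have ha1 : a < 1 := by linarith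
  have hb1 : b < 1 := by linarith
  have hΛpos : 0 < Λ := by
    have h1 : 0 < 1 - (a + b) ^ 2 := by nlinarith
    have h2 : 0 < 1 - (a - b) ^ 2 := by nlinarith
    rw [hΛ, hΛ₁, hΛ₂]
    nlinarith [mul_pos h1 h2]
  set s := Real.sqrt Λ with hs_def
  have hs0 : 0 ≤ s := Real.sqrt_nonneg _
  have hspos : 0 < s := Real.sqrt_pos.mpr hΛpos
  have hssq : s ^ 2 = (a ^ 2 - b ^ 2) ^ 2 + 1 - 2 * (a ^ 2 + b ^ 2) := by
    rw [hs_def, Real.sq_sqrt hΛpos.le, hΛ, hΛ₁, hΛ₂]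
  have hsqb : Real.sqrt Λ₂ = b := by rw [hΛ₂]; exact Real.sqrt_sq hb.le
  have hsqa : Real.sqrt Λ₁ = a := by rw [hΛ₁]; exact Real.sqrt_sq ha.le
  have hL₁' : L₁ = (1 + a ^ 2 - b ^ 2 + s) / 2 := by rw [hL₁, hΛ₁, hΛ₂]
  have hL₂' : L₂ = (1 + b ^ 2 - a ^ 2 + s) / 2 := by rw [hL₂, hΛ₁, hΛ₂]
  have hL₁lb : 1 - b < L₁ := by
    rw [hL₁']
    have hprod : 0 < (1 - a - b) * (1 + a - b) * b :=
      mul_pos (mul_pos (by linarith) (by linarith)) hb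
    have hdiff : s ^ 2 - (1 - 2 * b + b ^ 2 - a ^ 2) ^ 2
        = 4 * ((1 - a - b) * (1 + a - b) * b) := by linear_combination hssq
    have hsq : (1 - 2 * b + b ^ 2 - a ^ 2) ^ 2 < s ^ 2 := by linarith
    have hkey : (1 - 2 * b + b ^ 2 - a ^ 2) < s := lt_of_pow_lt_pow_left₀ 2 hs0 hsq
    linarith
  have hL₂lb : 1 - a < L₂ := by
    rw [hL₂']
    have hprod : 0 < (1 - a - b) * (1 - a + b) * a :=
      mul_pos (mul_pos (by linarith) (by linarith)) ha
    have hdiff : s ^ 2 - (1 - 2 * a + a ^ 2 - b ^ 2) ^ 2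
        = 4 * ((1 - a - b) * (1 - a + b) * a) := by linear_combination hssq
    have hsq : (1 - 2 * a + a ^ 2 - b ^ 2) ^ 2 < s ^ 2 := by linarith
    have hkey : (1 - 2 * a + a ^ 2 - b ^ 2) < s := lt_of_pow_lt_pow_left₀ 2 hs0 hsq
    linarith
  have hL₁ub : L₁ < 1 := by
    rw [hL₁']
    have hpos : (0:ℝ) ≤ 1 - a ^ 2 + b ^ 2 := by nlinarith
    have hdiff : (1 - a ^ 2 + b ^ 2) ^ 2 - s ^ 2 = 4 * b ^ 2 := by
      linear_combination -hssq
    have hsq : s ^ 2 < (1 - a ^ 2 + b ^ 2) ^ 2 := by nlinarith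
    have hkey : s < 1 - a ^ 2 + b ^ 2 := lt_of_pow_lt_pow_left₀ 2 hpos hsq
    linarith
  have hL₂ub : L₂ < 1 := by
    rw [hL₂']
    have hpos : (0:ℝ) ≤ 1 - b ^ 2 + a ^ 2 := by nlinarith
    have hdiff : (1 - b ^ 2 + a ^ 2) ^ 2 - s ^ 2 = 4 * a ^ 2 := by
      linear_combination -hssq
    have hsq : s ^ 2 < (1 - b ^ 2 + a ^ 2) ^ 2 := by nlinarith
    have hkey : s < 1 - b ^ 2 + a ^ 2 := lt_of_pow_lt_pow_left₀ 2 hpos hsq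
    linarith
  have hL₁pos : 0 < L₁ := by linarith
  have hL₂pos : 0 < L₂ := by linarith
  have hfix1 : L₁ * L₂ = L₂ - b ^ 2 := by
    rw [hL₁', hL₂']; linear_combination hssq / 4
  have hfix2 : L₁ * L₂ = L₁ - a ^ 2 := by
    rw [hL₁', hL₂']; linear_combination hssq / 4
  have hfp1 : 1 - b ^ 2 / L₂ = L₁ := by
    field_simp
    linarith [hfix1]
  have hfp2 : 1 - a ^ 2 / L₁ = L₂ := by
    field_simp
    linarith [hfix2]
  intro n
  induction n with
  | zero =>
      refine ⟨⟨by rw [hsqb]; linarith, by rw [hl₁0]; linarith, le_of_eq hl₁0⟩,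
        ⟨by rw [hsqa]; linarith, by rw [hl₂0]; linarith, le_of_eq hl₂0⟩⟩
  | succ n ih =>
      obtain ⟨⟨_, h1, h1'⟩, ⟨_, h2, h2'⟩⟩ := ih
      have hl2pos : 0 < l₂ n := lt_trans hL₂pos h2
      have hl1pos : 0 < l₁ n := lt_trans hL₁pos h1
      have hd1 : b ^ 2 / l₂ n < b ^ 2 / L₂ :=
        div_lt_div_of_pos_left (by positivity) hL₂pos h2
      have hd2 : a ^ 2 / l₁ n < a ^ 2 / L₁ :=
        div_lt_div_of_pos_left (by positivity) hL₁pos h1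
      have hnn1 : 0 ≤ b ^ 2 / l₂ n := div_nonneg (sq_nonneg b) hl2pos.le
      have hnn2 : 0 ≤ a ^ 2 / l₁ n := div_nonneg (sq_nonneg a) hl1pos.le
      refine ⟨⟨by rw [hsqb]; linarith, ?_, ?_⟩, ⟨by rw [hsqa]; linarith, ?_, ?_⟩⟩
      · rw [hl₁ n, hΛ₂]; linarith
      · rw [hl₁ n, hΛ₂]; linarith
      · rw [hl₂ n, hΛ₁]; linarith
      · rw [hl₂ n, hΛ₁]; linarith
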